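/- Under the assumptions of the controlled lattice system, for each R₁, R₂ > 0 there exists C₁ = C₁(R₁,R₂,T) > 0 such that for any initial data u_{0,1}, u_{0,2} ∈ ℓ² with norms ≤ R₁ and controls v₁, v₂ ∈ L²(0,T;H) with norms ≤ R₂, the corresponding solutions satisfy ‖u_{v₁} - u_{v₂}‖²_{C([0,T],ℓ²)} ≤ C₁(‖u_{0,1} - u_{0,2}‖² + ‖v₁ - v₂‖²_{L²(0,T;H)}). -/

import Mathlib

open MeasureTheory Set

noncomputable section

/-- `ℓ²(ℤ^N)`: square-summable real sequences indexed by `ℤ^N`. -/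
abbrev ESp (N : ℕ) := lp (fun _ : Fin N → ℤ => ℝ) 2

/-- `H = ℓ²(ℕ)`, a separable Hilbert space. -/
abbrev HSp := lp (fun _ : ℕ => ℝ) 2

/-- The standing assumptions on the controlled reaction-diffusion lattice system
`du/dt = -νAu - f(u) - γu + g(t) + σ(t,u)v(t)` on `ℓ²(ℤ^N)`:
`A` is the bounded nonnegative self-adjoint (negative) discrete Laplacian, `f` is the
monotone, locally Lipschitz Nemytskii drift with `f(0)=0` (from (F1)), `γ ≤ 0`, `ν > 0`,
`g ∈ L²(0,T;ℓ²)` (from (gh)), and `σ(t,u) : H → ℓ²` is the Hilbert–Schmidt diffusion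
operator `σ(t,u)v = Σ_k (h_k(t) + σ_k(u)) v_k`, which under (σ1)-(δ1) and (gh) has
linear growth and is locally Lipschitz in `u`, uniformly in `t ∈ [0,T]`. -/
structure ControlledSetting (N : ℕ) (T : ℝ) where
  ν : ℝ
  γ : ℝ
  A : ESp N →L[ℝ] ESp N
  f : ESp N → ESp N
  g : ℝ → ESp N
  σ : ℝ → ESp N → (HSp →L[ℝ] ESp N)
  hT : 0 < T
  hν : 0 < ν
  hγ : γ ≤ 0
  hA_nonneg : ∀ u : ESp N, 0 ≤ (inner ℝ (A u) u : ℝ)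
  hA_symm : ∀ u v : ESp N, (inner ℝ (A u) v : ℝ) = (inner ℝ u (A v) : ℝ)
  hf0 : f 0 = 0
  hf_mono : ∀ u v : ESp N, 0 ≤ (inner ℝ (f u - f v) (u - v) : ℝ)
  hf_lip : ∀ R > (0:ℝ), ∃ L > (0:ℝ), ∀ u v : ESp N,
    ‖u‖ ≤ R → ‖v‖ ≤ R → ‖f u - f v‖ ≤ L * ‖u - v‖
  hg_meas : AEStronglyMeasurable g (volume.restrict (Icc 0 T))
  hg_int : IntegrableOn (fun t => ‖g t‖ ^ 2) (Icc 0 T)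
  hσ_growth : ∃ C > (0:ℝ), ∀ t ∈ Icc (0:ℝ) T, ∀ u : ESp N, ‖σ t u‖ ≤ C * (1 + ‖u‖)
  hσ_lip : ∀ R > (0:ℝ), ∃ L > (0:ℝ), ∀ t ∈ Icc (0:ℝ) T, ∀ u v : ESp N,
    ‖u‖ ≤ R → ‖v‖ ≤ R → ‖σ t u - σ t v‖ ≤ L * ‖u - v‖
  hσ_meas : ∀ u : ESp N, AEStronglyMeasurable (fun t => σ t u) (volume.restrict (Icc 0 T))

/-- `v` is an admissible control in `L²(0,T;H)`. -/
def IsControl (T : ℝ) (v : ℝ → HSp) : Prop :=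
  AEStronglyMeasurable v (volume.restrict (Icc 0 T)) ∧
    IntegrableOn (fun t => ‖v t‖ ^ 2) (Icc 0 T)

/-- `u ∈ C([0,T],ℓ²)` is a solution of the controlled equation with control `v`
and initial condition `u₀`, in the integral-equation sense. -/
def IsSolution {N : ℕ} {T : ℝ} (S : ControlledSetting N T) (v : ℝ → HSp)
    (u₀ : ESp N) (u : ℝ → ESp N) : Prop :=
  ContinuousOn u (Icc 0 T) ∧
    ∀ t ∈ Icc (0:ℝ) T, u t = u₀ + ∫ s in (0:ℝ)..t,
      (-(S.ν • S.A (u s)) - S.f (u s) - S.γ • u s + S.g s + S.σ s (u s) (v s))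


set_option maxHeartbeats 1000000

section Aux
open intervalIntegral

lemma interval_int_of_int {T : ℝ} {f : ℝ → ℝ} (hf : IntegrableOn f (Icc 0 T))
    {r s : ℝ} (hr : r ∈ Icc (0:ℝ) T) (hs : s ∈ Icc (0:ℝ) T) :
    IntervalIntegrable f volume r s := by
  apply (hf.mono_set (uIcc_subset_Icc hr hs)).intervalIntegrable

lemma gronwall_aux {T c : ℝ} (hT : 0 ≤ T) (hc : 0 ≤ c) {a φ : ℝ → ℝ}
    (ha_int : IntegrableOn a (Icc 0 T))
    (ha0 : ∀ s ∈ Icc (0:ℝ) T, 0 ≤ a s)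
    (hφ_cont : ContinuousOn φ (Icc 0 T))
    (hφ0 : ∀ s ∈ Icc (0:ℝ) T, 0 ≤ φ s)
    (h : ∀ t ∈ Icc (0:ℝ) T, φ t ≤ c + ∫ s in (0:ℝ)..t, a s * φ s) :
    ∀ j : ℕ, ∀ t ∈ Icc (0:ℝ) T, (∫ s in (0:ℝ)..t, a s) ≤ j / 2 →
      c + (∫ s in (0:ℝ)..t, a s * φ s) ≤ 2 ^ j * c := by
  -- bound for φ
  obtain ⟨K, hK⟩ := (isCompact_Icc (a := (0:ℝ)) (b := T)).exists_bound_of_continuousOn hφ_cont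
  have hK0 : 0 ≤ K := le_trans (norm_nonneg _) (hK 0 ⟨le_refl _, hT⟩)
  have hφK : ∀ s ∈ Icc (0:ℝ) T, φ s ≤ K := fun s hs =>
    le_trans (le_abs_self _) (hK s hs)
  -- integrability of a * φ
  have haφ_int : IntegrableOn (fun s => a s * φ s) (Icc 0 T) := by
    refine Integrable.mono' (ha_int.norm.const_mul K) ?_ ?_
    · exact ha_int.aestronglyMeasurable.mul (hφ_cont.aestronglyMeasurable measurableSet_Icc)
    · filter_upwards [ae_restrict_mem measurableSet_Icc] with s hs
      rw [Real.norm_eq_abs, abs_mul]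
      have := hK s hs
      rw [Real.norm_eq_abs] at this
      have h2 : |φ s| ≤ K := this
      have h3 : 0 ≤ |a s| := abs_nonneg _
      calc |a s| * |φ s| ≤ |a s| * K := by nlinarith
        _ = K * ‖a s‖ := by rw [Real.norm_eq_abs]; ring
  have IIa : ∀ r ∈ Icc (0:ℝ) T, ∀ s ∈ Icc (0:ℝ) T, IntervalIntegrable a volume r s :=
    fun r hr s hs => interval_int_of_int ha_int hr hs
  have IIaφ : ∀ r ∈ Icc (0:ℝ) T, ∀ s ∈ Icc (0:ℝ) T,
      IntervalIntegrable (fun s => a s * φ s) volume r s :=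
    fun r hr s hs => interval_int_of_int haφ_int hr hs
  set A : ℝ → ℝ := fun r => ∫ s in (0:ℝ)..r, a s with hA
  have hAcont : ContinuousOn A (Icc 0 T) := by
    have := continuousOn_primitive_interval (a := (0:ℝ)) (b := T) (μ := volume) (f := a)
      (by rwa [uIcc_of_le hT])
    rwa [uIcc_of_le hT] at this
  have hAsplit : ∀ r ∈ Icc (0:ℝ) T, ∀ s ∈ Icc (0:ℝ) T,
      (∫ x in r..s, a x) = A s - A r := by
    intro r hr s hs
    rw [hA]
    have := integral_interval_sub_left (IIa 0 ⟨le_refl _, hT⟩ s hs) (IIa 0 ⟨le_refl _, hT⟩ r hr)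
    rw [← this]
  have hAmono : ∀ r ∈ Icc (0:ℝ) T, ∀ s ∈ Icc (0:ℝ) T, r ≤ s → A r ≤ A s := by
    intro r hr s hs hrs
    have h1 : (0:ℝ) ≤ ∫ x in r..s, a x := by
      apply intervalIntegral.integral_nonneg hrs
      intro x hx
      exact ha0 x ⟨le_trans hr.1 hx.1, le_trans hx.2 hs.2⟩
    rw [hAsplit r hr s hs] at h1
    linarith
  intro j
  induction j with
  | zero =>
    intro t ht hAt
    simp only [Nat.cast_zero, zero_div] at hAt
    have h1 : (∫ s in (0:ℝ)..t, a s * φ s) ≤ ∫ s in (0:ℝ)..t, a s * K := by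
      apply integral_mono_on ht.1 (IIaφ 0 ⟨le_refl _, hT⟩ t ht)
        ((IIa 0 ⟨le_refl _, hT⟩ t ht).mul_const K)
      intro x hx
      have hx' : x ∈ Icc (0:ℝ) T := ⟨hx.1, le_trans hx.2 ht.2⟩
      have := hφK x hx'
      have := ha0 x hx'
      nlinarith
    have h2 : (∫ s in (0:ℝ)..t, a s * K) = A t * K := by
      rw [intervalIntegral.integral_mul_const]
    simp only [pow_zero, one_mul]
    nlinarith
  | succ j ih =>
    intro t ht hAt
    by_cases hcase : A t ≤ j / 2
    · have := ih t ht hcase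
      have h2 : (2:ℝ) ^ j * c ≤ 2 ^ (j+1) * c := by
        apply mul_le_mul_of_nonneg_right _ hc
        apply pow_le_pow_right₀ (by norm_num) (Nat.le_succ _)
      linarith
    · push_neg at hcase
      have hA0 : A 0 = 0 := intervalIntegral.integral_same
      have h0T : (0:ℝ) ∈ Icc (0:ℝ) T := ⟨le_refl _, hT⟩
      -- IVT : find s' with A s' = j/2
      have hival : (j:ℝ)/2 ∈ Icc (A 0) (A t) := by
        constructor
        · rw [hA0]; positivity
        · exact le_of_lt hcase
      obtain ⟨s', hs'mem, hAs'⟩ := intermediate_value_Icc ht.1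
        (hAcont.mono (Icc_subset_Icc_right ht.2)) hival
      have hs'T : s' ∈ Icc (0:ℝ) T := ⟨hs'mem.1, le_trans hs'mem.2 ht.2⟩
      have hIH := ih s' hs'T (le_of_eq hAs')
      -- sup of φ on [s', t]
      obtain ⟨r₀, hr₀mem, hr₀max⟩ := (isCompact_Icc (a := s') (b := t)).exists_isMaxOn
        ⟨s', ⟨le_refl _, hs'mem.2⟩⟩ (hφ_cont.mono (Icc_subset_Icc hs'T.1 ht.2))
      set χ := φ r₀ with hχ
      have hr₀T : r₀ ∈ Icc (0:ℝ) T := ⟨le_trans hs'T.1 hr₀mem.1, le_trans hr₀mem.2 ht.2⟩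
      have hχ0 : 0 ≤ χ := hφ0 r₀ hr₀T
      -- ∫_{s'}^{r} aφ ≤ (A r - A s') * χ for r ∈ [s', t]
      have hseg : ∀ r, r ∈ Icc s' t → (∫ x in s'..r, a x * φ x) ≤ (A r - A s') * χ := by
        intro r hr
        have hrT : r ∈ Icc (0:ℝ) T := ⟨le_trans hs'T.1 hr.1, le_trans hr.2 ht.2⟩
        have h1 : (∫ x in s'..r, a x * φ x) ≤ ∫ x in s'..r, a x * χ := by
          apply integral_mono_on hr.1 (IIaφ s' hs'T r hrT) ((IIa s' hs'T r hrT).mul_const χ)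
          intro x hx
          have hxT : x ∈ Icc (0:ℝ) T := ⟨le_trans hs'T.1 hx.1, le_trans hx.2 hrT.2⟩
          have hxmax : φ x ≤ χ := hr₀max ⟨hx.1, le_trans hx.2 hr.2⟩
          have := ha0 x hxT
          nlinarith
        have h2 : (∫ x in s'..r, a x * χ) = (A r - A s') * χ := by
          rw [intervalIntegral.integral_mul_const, hAsplit s' hs'T r hrT]
        linarith
      have hAhalf : ∀ r, r ∈ Icc s' t → A r - A s' ≤ 1/2 := by
        intro r hr
        have hrT : r ∈ Icc (0:ℝ) T := ⟨le_trans hs'T.1 hr.1, le_trans hr.2 ht.2⟩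
        have := hAmono r hrT t ht hr.2
        rw [hAs']
        push_cast at hAt ⊢
        linarith
      -- split integral at s'
      have hsplitInt : ∀ r, r ∈ Icc s' t →
          (∫ x in (0:ℝ)..r, a x * φ x) =
            (∫ x in (0:ℝ)..s', a x * φ x) + ∫ x in s'..r, a x * φ x := by
        intro r hr
        have hrT : r ∈ Icc (0:ℝ) T := ⟨le_trans hs'T.1 hr.1, le_trans hr.2 ht.2⟩
        rw [← intervalIntegral.integral_add_adjacent_intervals (IIaφ 0 h0T s' hs'T)
          (IIaφ s' hs'T r hrT)]
      -- bound χ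
      have hχbound : χ ≤ 2 ^ (j+1) * c := by
        have h1 := h r₀ hr₀T
        rw [hsplitInt r₀ hr₀mem] at h1
        have h2 := hseg r₀ hr₀mem
        have h3 := hAhalf r₀ hr₀mem
        have h4 : (A r₀ - A s') * χ ≤ (1/2) * χ := mul_le_mul_of_nonneg_right h3 hχ0
        have hp : (2:ℝ)^(j+1) = 2^j * 2 := pow_succ 2 j
        rw [hp]
        linarith
      rw [hsplitInt t ⟨hs'mem.2, le_refl _⟩]
      have h5 := hseg t ⟨hs'mem.2, le_refl _⟩
      have h6 := hAhalf t ⟨hs'mem.2, le_refl _⟩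
      have h7 : A t - A s' ≥ 0 := by
        have := hAmono s' hs'T t ht hs'mem.2
        linarith
      have h8 : (A t - A s') * χ ≤ (1/2) * χ := mul_le_mul_of_nonneg_right h6 hχ0
      have hp : (2:ℝ)^(j+1) = 2^j * 2 := pow_succ 2 j
      rw [hp] at hχbound ⊢
      linarith


lemma interval_int_of_int' {E : Type*} [NormedAddCommGroup E] {T : ℝ} {f : ℝ → E}
    (hf : IntegrableOn f (Icc 0 T))
    {r s : ℝ} (hr : r ∈ Icc (0:ℝ) T) (hs : s ∈ Icc (0:ℝ) T) :
    IntervalIntegrable f volume r s :=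
  (hf.mono_set (uIcc_subset_Icc hr hs)).intervalIntegrable

variable {E : Type*} [NormedAddCommGroup E] [InnerProductSpace ℝ E] [CompleteSpace E]

lemma sq_norm_sub_le (x y : E) : ‖x‖^2 - ‖y‖^2 ≤ 2 * (inner ℝ (x - y) x : ℝ) := by
  have h1 : (inner ℝ (x - y) x : ℝ) = ‖x‖^2 - (inner ℝ y x : ℝ) := by
    rw [inner_sub_left, real_inner_self_eq_norm_sq]
  have h2 : (inner ℝ y x : ℝ) ≤ ‖y‖ * ‖x‖ := real_inner_le_norm y x
  nlinarith [sq_nonneg (‖x‖ - ‖y‖)]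

lemma energy_ineq {T : ℝ} (hT : 0 ≤ T) {u F : ℝ → E}
    (hu_cont : ContinuousOn u (Icc 0 T))
    (hF_int : IntegrableOn F (Icc 0 T))
    (hu : ∀ t ∈ Icc (0:ℝ) T, u t = u 0 + ∫ s in (0:ℝ)..t, F s) :
    ∀ t ∈ Icc (0:ℝ) T, ‖u t‖^2 ≤ ‖u 0‖^2 + 2 * ∫ s in (0:ℝ)..t, (inner ℝ (F s) (u s) : ℝ) := by
  have h0T : (0:ℝ) ∈ Icc (0:ℝ) T := ⟨le_refl _, hT⟩
  have hTT : T ∈ Icc (0:ℝ) T := ⟨hT, le_refl _⟩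
  intro t ht
  obtain ⟨K, hK⟩ := (isCompact_Icc (a:=(0:ℝ)) (b:=T)).exists_bound_of_continuousOn hu_cont
  have hK0 : 0 ≤ K := le_trans (norm_nonneg _) (hK 0 h0T)
  have hFu_int : IntegrableOn (fun s => (inner ℝ (F s) (u s) : ℝ)) (Icc 0 T) := by
    refine Integrable.mono' (hF_int.norm.const_mul K) ?_ ?_
    · exact AEStronglyMeasurable.inner hF_int.aestronglyMeasurable
        (hu_cont.aestronglyMeasurable measurableSet_Icc)
    · filter_upwards [ae_restrict_mem measurableSet_Icc] with s hs
      calc ‖(inner ℝ (F s) (u s) : ℝ)‖ ≤ ‖F s‖ * ‖u s‖ := norm_inner_le_norm _ _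
        _ ≤ K * ‖F s‖ := by have := hK s hs; nlinarith [norm_nonneg (F s)]
  have hnorm_int : IntegrableOn (fun s => ‖F s‖) (Icc 0 T) := hF_int.norm
  set B := ∫ s in (0:ℝ)..T, ‖F s‖ with hB
  have hB0 : 0 ≤ B := intervalIntegral.integral_nonneg hT (fun x _ => norm_nonneg _)
  have hBt : (∫ s in (0:ℝ)..t, ‖F s‖) ≤ B := by
    have h1 := integral_interval_sub_left (interval_int_of_int' hnorm_int h0T hTT)
      (interval_int_of_int' hnorm_int h0T ht)
    have h2 : (0:ℝ) ≤ ∫ s in t..T, ‖F s‖ :=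
      intervalIntegral.integral_nonneg ht.2 (fun x _ => norm_nonneg _)
    rw [hB]; linarith [h1 ▸ h2]
  refine le_of_forall_pos_le_add ?_
  intro ε hε
  set ε' : ℝ := ε / (2 * (1 + B)) with hε'def
  have hε' : 0 < ε' := by positivity
  -- uniform continuity
  have hUC : UniformContinuousOn u (Icc 0 T) :=
    (isCompact_Icc (a:=(0:ℝ)) (b:=T)).uniformContinuousOn_of_continuous hu_cont
  obtain ⟨δ, hδ, hδ'⟩ := (Metric.uniformContinuousOn_iff).mp hUC ε' hε'
  obtain ⟨n, hn⟩ := exists_nat_gt (t / δ)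
  have htδ : 0 ≤ t / δ := div_nonneg ht.1 hδ.le
  have hn0 : 0 < (n:ℝ) := lt_of_le_of_lt htδ hn
  have hnnat : (0:ℕ) < n := by exact_mod_cast hn0
  have hstep : t / n < δ := by
    rw [div_lt_iff₀ hn0]
    rw [div_lt_iff₀ hδ] at hn
    linarith
  have hstep0 : 0 ≤ t / n := div_nonneg ht.1 hn0.le
  set τ : ℕ → ℝ := fun i => (i:ℝ) * (t / n) with hτ
  have hτ0 : τ 0 = 0 := by simp [hτ]
  have hτn : τ n = t := by
    rw [hτ]; field_simp
  have hτmono : ∀ i j : ℕ, i ≤ j → τ i ≤ τ j := by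
    intro i j hij
    exact mul_le_mul_of_nonneg_right (by exact_mod_cast hij) hstep0
  have hτmem : ∀ i ≤ n, τ i ∈ Icc (0:ℝ) t := by
    intro i hi
    constructor
    · rw [hτ]; positivity
    · rw [← hτn]; exact hτmono i n hi
  have hτmemT : ∀ i ≤ n, τ i ∈ Icc (0:ℝ) T := fun i hi =>
    ⟨(hτmem i hi).1, le_trans (hτmem i hi).2 ht.2⟩
  have hτdiff : ∀ i : ℕ, τ (i+1) - τ i = t / n := by
    intro i; rw [hτ]; push_cast; ring
  -- the integrand with error
  set G : ℝ → ℝ := fun s => (inner ℝ (F s) (u s) : ℝ) + ε' * ‖F s‖ with hG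
  have hG_int : IntegrableOn G (Icc 0 T) := hFu_int.add (hnorm_int.const_mul ε')
  -- per-interval estimate
  have key : ∀ i < n, ‖u (τ (i+1))‖^2 - ‖u (τ i)‖^2 ≤ 2 * ∫ s in τ i..τ (i+1), G s := by
    intro i hi
    set p := τ i with hp
    set q := τ (i+1) with hq
    have hpT : p ∈ Icc (0:ℝ) T := hτmemT i (le_of_lt hi)
    have hqT : q ∈ Icc (0:ℝ) T := hτmemT (i+1) hi
    have hpq : p ≤ q := hτmono i (i+1) (Nat.le_succ _)
    have hsub : u q - u p = ∫ s in p..q, F s := by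
      rw [hu q hqT, hu p hpT]
      have := integral_interval_sub_left (interval_int_of_int' hF_int h0T hqT)
        (interval_int_of_int' hF_int h0T hpT)
      rw [← this]; abel
    have hinner : (inner ℝ (u q - u p) (u q) : ℝ) = ∫ s in p..q, (inner ℝ (F s) (u q) : ℝ) := by
      rw [hsub, intervalIntegral.integral_of_le hpq, intervalIntegral.integral_of_le hpq]
      have hint : Integrable F (volume.restrict (Ioc p q)) :=
        hF_int.mono_set (fun x hx => ⟨le_trans hpT.1 hx.1.le, le_trans hx.2 hqT.2⟩)
      calc (inner ℝ (∫ s in Ioc p q, F s) (u q) : ℝ)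
          = (inner ℝ (u q) (∫ s in Ioc p q, F s) : ℝ) := real_inner_comm _ _
        _ = ∫ s in Ioc p q, (inner ℝ (u q) (F s) : ℝ) := (integral_inner hint (u q)).symm
        _ = ∫ s in Ioc p q, (inner ℝ (F s) (u q) : ℝ) := by
            apply MeasureTheory.integral_congr_ae; filter_upwards with s; exact real_inner_comm _ _
    have hptwise : ∀ s ∈ Icc p q, (inner ℝ (F s) (u q) : ℝ) ≤ G s := by
      intro s hs
      have hsT : s ∈ Icc (0:ℝ) T := ⟨le_trans hpT.1 hs.1, le_trans hs.2 hqT.2⟩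
      have hdist : dist s q < δ := by
        have hpq' : q - p = t / n := by rw [hp, hq]; exact hτdiff i
        rw [Real.dist_eq, abs_sub_lt_iff]
        constructor
        · linarith [hs.2, hδ]
        · linarith [hs.1, hpq', hstep]
      have hucont : ‖u q - u s‖ ≤ ε' := by
        have := hδ' s hsT q hqT hdist
        rw [dist_eq_norm] at this
        have : ‖u s - u q‖ ≤ ε' := this.le
        rwa [← norm_neg, neg_sub] at this
      have h1 : (inner ℝ (F s) (u q) : ℝ) - (inner ℝ (F s) (u s) : ℝ)
          = (inner ℝ (F s) (u q - u s) : ℝ) := by rw [inner_sub_right]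
      have h2 : (inner ℝ (F s) (u q - u s) : ℝ) ≤ ‖F s‖ * ‖u q - u s‖ :=
        real_inner_le_norm _ _
      have h3 : ‖F s‖ * ‖u q - u s‖ ≤ ‖F s‖ * ε' :=
        mul_le_mul_of_nonneg_left hucont (norm_nonneg _)
      rw [hG]
      simp only
      nlinarith
    have hmono : (∫ s in p..q, (inner ℝ (F s) (u q) : ℝ)) ≤ ∫ s in p..q, G s := by
      apply integral_mono_on hpq
        (interval_int_of_int' (hF_int.inner_const (𝕜 := ℝ) (u q)) hpT hqT)
        (interval_int_of_int' hG_int hpT hqT)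
      exact hptwise
    have hstart := sq_norm_sub_le (u q) (u p)
    rw [hinner] at hstart
    linarith
  -- sum up
  have hsumL : ∑ i ∈ Finset.range n, (‖u (τ (i+1))‖^2 - ‖u (τ i)‖^2)
      = ‖u t‖^2 - ‖u 0‖^2 := by
    rw [Finset.sum_range_sub (fun i => ‖u (τ i)‖^2)]
    rw [hτn, hτ0]
  have hsumR : ∑ i ∈ Finset.range n, (2 * ∫ s in τ i..τ (i+1), G s)
      = 2 * ∫ s in (0:ℝ)..t, G s := by
    rw [← Finset.mul_sum]
    rw [intervalIntegral.sum_integral_adjacent_intervals (fun k hk =>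
      interval_int_of_int' hG_int (hτmemT k (le_of_lt hk)) (hτmemT (k+1) hk))]
    rw [hτ0, hτn]
  have hsum : ‖u t‖^2 - ‖u 0‖^2 ≤ 2 * ∫ s in (0:ℝ)..t, G s := by
    rw [← hsumL, ← hsumR]
    exact Finset.sum_le_sum (fun i hi => key i (Finset.mem_range.mp hi))
  have hGsplit : (∫ s in (0:ℝ)..t, G s)
      = (∫ s in (0:ℝ)..t, (inner ℝ (F s) (u s) : ℝ)) + ε' * ∫ s in (0:ℝ)..t, ‖F s‖ := by
    rw [hG]
    rw [intervalIntegral.integral_add (interval_int_of_int' hFu_int h0T ht)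
      ((interval_int_of_int' hnorm_int h0T ht).const_mul ε')]
    rw [intervalIntegral.integral_const_mul]
  have hfinal : ε' * (∫ s in (0:ℝ)..t, ‖F s‖) ≤ ε / 2 := by
    have h1 : ε' * (∫ s in (0:ℝ)..t, ‖F s‖) ≤ ε' * B := mul_le_mul_of_nonneg_left hBt hε'.le
    have h2 : ε' * B ≤ ε / 2 := by
      rw [hε'def]
      rw [div_mul_eq_mul_div, div_le_div_iff₀ (by positivity) (by norm_num)]
      nlinarith
    linarith
  rw [hGsplit] at hsum
  linarith


variable {N : ℕ} {T : ℝ}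

lemma σ_contAt (S : ControlledSetting N T) {t : ℝ} (ht : t ∈ Icc (0:ℝ) T) (x : ESp N) :
    ContinuousAt (S.σ t) x := by
  obtain ⟨L, hL, hlip⟩ := S.hσ_lip (‖x‖ + 1) (by positivity)
  rw [Metric.continuousAt_iff]
  intro ε hε
  refine ⟨min 1 (ε / L), by positivity, ?_⟩
  intro y hy
  have h1 : dist y x < 1 := lt_of_lt_of_le hy (min_le_left _ _)
  have h1' : ‖y - x‖ < 1 := by rwa [dist_eq_norm] at h1
  have hy_norm : ‖y‖ ≤ ‖x‖ + 1 := by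
    have := norm_sub_norm_le y x
    linarith
  have h2 := hlip t ht y x hy_norm (by linarith)
  have h3 : ‖y - x‖ < ε / L := by
    rw [dist_eq_norm] at hy
    exact lt_of_lt_of_le hy (min_le_right _ _)
  rw [dist_eq_norm]
  calc ‖S.σ t y - S.σ t x‖ ≤ L * ‖y - x‖ := h2
    _ < L * (ε / L) := by exact mul_lt_mul_of_pos_left h3 hL
    _ = ε := by field_simp

lemma f_cont (S : ControlledSetting N T) : Continuous S.f := by
  rw [continuous_iff_continuousAt]
  intro x
  obtain ⟨L, hL, hlip⟩ := S.hf_lip (‖x‖ + 1) (by positivity)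
  rw [Metric.continuousAt_iff]
  intro ε hε
  refine ⟨min 1 (ε / L), by positivity, ?_⟩
  intro y hy
  have h1 : dist y x < 1 := lt_of_lt_of_le hy (min_le_left _ _)
  have h1' : ‖y - x‖ < 1 := by rwa [dist_eq_norm] at h1
  have hy_norm : ‖y‖ ≤ ‖x‖ + 1 := by
    have := norm_sub_norm_le y x
    linarith
  have h2 := hlip y x hy_norm (by linarith)
  have h3 : ‖y - x‖ < ε / L := by
    rw [dist_eq_norm] at hy
    exact lt_of_lt_of_le hy (min_le_right _ _)
  rw [dist_eq_norm]
  calc ‖S.f y - S.f x‖ ≤ L * ‖y - x‖ := h2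
    _ < L * (ε / L) := mul_lt_mul_of_pos_left h3 hL
    _ = ε := by field_simp

lemma sigma_path_meas (S : ControlledSetting N T) {w : ℝ → ESp N} (hw : Continuous w) :
    AEStronglyMeasurable (fun s => S.σ s (w s)) (volume.restrict (Icc 0 T)) := by
  have hwm : StronglyMeasurable w := hw.stronglyMeasurable
  have happrox := hwm.tendsto_approx
  have hn_meas : ∀ n, AEStronglyMeasurable (fun s => S.σ s (hwm.approx n s))
      (volume.restrict (Icc 0 T)) := by
    intro n
    have heq : (fun s => S.σ s (hwm.approx n s)) = fun s =>
        ∑ c ∈ (hwm.approx n).range,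
          Set.indicator ((hwm.approx n) ⁻¹' {c}) (fun s' => S.σ s' c) s := by
      funext s
      rw [Finset.sum_eq_single_of_mem (hwm.approx n s)
        (SimpleFunc.mem_range_self _ s)]
      · rw [Set.indicator_of_mem (by simp)]
      · intro b _ hb
        rw [Set.indicator_of_notMem]
        simp only [Set.mem_preimage, Set.mem_singleton_iff]
        exact fun h => hb (h ▸ rfl)
    rw [heq]
    apply Finset.aestronglyMeasurable_fun_sum
    intro c _
    exact (S.hσ_meas c).indicator ((hwm.approx n).measurableSet_fiber c)
  apply aestronglyMeasurable_of_tendsto_ae Filter.atTop hn_meas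
  filter_upwards [ae_restrict_mem measurableSet_Icc] with s hs
  exact ((σ_contAt S hs (w s)).tendsto).comp (happrox s)

lemma path_meas (S : ControlledSetting N T) {u : ℝ → ESp N}
    (hu : ContinuousOn u (Icc 0 T)) :
    AEStronglyMeasurable (fun s => S.σ s (u s)) (volume.restrict (Icc 0 T)) := by
  have hT := S.hT.le
  have hw : Continuous (fun s : ℝ => u (max 0 (min s T))) :=
    hu.comp_continuous (continuous_const.max (continuous_id.min continuous_const))
      (fun x => ⟨le_max_left _ _, max_le hT (min_le_right x T)⟩)
  apply (sigma_path_meas S hw).congr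
  filter_upwards [ae_restrict_mem measurableSet_Icc] with s hs
  have h1 : max 0 (min s T) = s := by rw [min_eq_left hs.2, max_eq_right hs.1]
  simp only [h1]

lemma sigma_apply_meas (S : ControlledSetting N T) {u : ℝ → ESp N} {v : ℝ → HSp}
    (hu : ContinuousOn u (Icc 0 T))
    (hv : AEStronglyMeasurable v (volume.restrict (Icc 0 T))) :
    AEStronglyMeasurable (fun s => S.σ s (u s) (v s)) (volume.restrict (Icc 0 T)) := by
  have h1 := path_meas S hu
  have heq : (fun s => S.σ s (u s) (v s)) =
      (fun p : (HSp →L[ℝ] ESp N) × HSp => p.1 p.2) ∘ (fun s => (S.σ s (u s), v s)) := rfl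
  rw [heq]
  exact (isBoundedBilinearMap_apply.continuous).comp_aestronglyMeasurable (h1.prodMk hv)

lemma norm_int_of_sq {E : Type*} [NormedAddCommGroup E] {f : ℝ → E}
    (hm : AEStronglyMeasurable f (volume.restrict (Icc 0 T)))
    (hi : IntegrableOn (fun s => ‖f s‖^2) (Icc 0 T)) :
    IntegrableOn (fun s => ‖f s‖) (Icc 0 T) := by
  refine Integrable.mono' (g := fun s => 1 + ‖f s‖^2)
    (Integrable.add (integrableOn_const (C := (1:ℝ)) measure_Icc_lt_top.ne enorm_ne_top) hi) hm.norm ?_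
  filter_upwards with s
  rw [Real.norm_eq_abs, abs_of_nonneg (norm_nonneg _)]
  nlinarith [sq_nonneg (‖f s‖ - 1)]

lemma g_int (S : ControlledSetting N T) : IntegrableOn S.g (Icc 0 T) := by
  refine Integrable.mono' (g := fun s => 1 + ‖S.g s‖^2)
    (Integrable.add (integrableOn_const (C := (1:ℝ)) measure_Icc_lt_top.ne enorm_ne_top) S.hg_int) S.hg_meas ?_
  filter_upwards with s
  nlinarith [sq_nonneg (‖S.g s‖ - 1)]

lemma drift_cont_part (S : ControlledSetting N T) {u : ℝ → ESp N}
    (hu : ContinuousOn u (Icc 0 T)) :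
    ContinuousOn (fun s => -(S.ν • S.A (u s)) - S.f (u s) - S.γ • u s) (Icc 0 T) := by
  have h1 : ContinuousOn (fun s => S.A (u s)) (Icc 0 T) := S.A.continuous.comp_continuousOn hu
  exact (((h1.const_smul S.ν).neg.sub ((f_cont S).comp_continuousOn hu)).sub
    (hu.const_smul S.γ))

lemma sigma_apply_int (S : ControlledSetting N T) {u : ℝ → ESp N} {v : ℝ → HSp}
    (hu : ContinuousOn u (Icc 0 T)) (hv : IsControl T v) :
    IntegrableOn (fun s => S.σ s (u s) (v s)) (Icc 0 T) := by
  have hT := S.hT.le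
  obtain ⟨C, hC, hgrow⟩ := S.hσ_growth
  obtain ⟨K, hK⟩ := (isCompact_Icc (a:=(0:ℝ)) (b:=T)).exists_bound_of_continuousOn hu
  have hK0 : 0 ≤ K := le_trans (norm_nonneg _) (hK 0 ⟨le_refl _, hT⟩)
  have hdom : IntegrableOn (fun s => C * (1+K) * (1 + ‖v s‖^2)) (Icc 0 T) :=
    (((integrableOn_const measure_Icc_lt_top.ne).add hv.2).const_mul _)
  have hmeas := sigma_apply_meas S hu hv.1
  refine Integrable.mono' hdom hmeas ?_
  filter_upwards [ae_restrict_mem measurableSet_Icc] with s hs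
  have hv1 : ‖v s‖ ≤ 1 + ‖v s‖^2 := by nlinarith [sq_nonneg (‖v s‖ - 1)]
  have hu1 : 1 + ‖u s‖ ≤ 1 + K := by linarith [hK s hs]
  have hmain : (1+‖u s‖) * ‖v s‖ ≤ (1+K) * (1+‖v s‖^2) :=
    mul_le_mul hu1 hv1 (norm_nonneg _) (by linarith)
  calc ‖S.σ s (u s) (v s)‖ ≤ ‖S.σ s (u s)‖ * ‖v s‖ := (S.σ s (u s)).le_opNorm _
    _ ≤ (C * (1 + ‖u s‖)) * ‖v s‖ :=
        mul_le_mul_of_nonneg_right (hgrow s hs (u s)) (norm_nonneg _)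
    _ = C * ((1+‖u s‖) * ‖v s‖) := by ring
    _ ≤ C * ((1+K) * (1+‖v s‖^2)) := mul_le_mul_of_nonneg_left hmain hC.le
    _ = C * (1+K) * (1 + ‖v s‖^2) := by ring

lemma drift_int (S : ControlledSetting N T) {u : ℝ → ESp N} {v : ℝ → HSp}
    (hu : ContinuousOn u (Icc 0 T)) (hv : IsControl T v) :
    IntegrableOn (fun s => -(S.ν • S.A (u s)) - S.f (u s) - S.γ • u s + S.g s
      + S.σ s (u s) (v s)) (Icc 0 T) := by
  have h1 : IntegrableOn (fun s => -(S.ν • S.A (u s)) - S.f (u s) - S.γ • u s) (Icc 0 T) :=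
    (drift_cont_part S hu).integrableOn_Icc
  exact (h1.add (g_int S)).add (sigma_apply_int S hu hv)

lemma gronwall {T c M : ℝ} (hT : 0 ≤ T) (hc : 0 ≤ c) {a φ : ℝ → ℝ}
    (ha_int : IntegrableOn a (Icc 0 T))
    (ha0 : ∀ s ∈ Icc (0:ℝ) T, 0 ≤ a s)
    (hφ_cont : ContinuousOn φ (Icc 0 T))
    (hφ0 : ∀ s ∈ Icc (0:ℝ) T, 0 ≤ φ s)
    (h : ∀ t ∈ Icc (0:ℝ) T, φ t ≤ c + ∫ s in (0:ℝ)..t, a s * φ s)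
    (hM : (∫ s in (0:ℝ)..T, a s) ≤ M) :
    ∀ t ∈ Icc (0:ℝ) T, φ t ≤ 2 ^ (⌈2*M⌉₊) * c := by
  intro t ht
  have h0T : (0:ℝ) ∈ Icc (0:ℝ) T := ⟨le_refl _, hT⟩
  have hTT : T ∈ Icc (0:ℝ) T := ⟨hT, le_refl _⟩
  have hmono : (∫ s in (0:ℝ)..t, a s) ≤ ∫ s in (0:ℝ)..T, a s := by
    have h1 := integral_interval_sub_left (interval_int_of_int ha_int h0T hTT)
      (interval_int_of_int ha_int h0T ht)
    have h2 : (0:ℝ) ≤ ∫ s in t..T, a s :=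
      intervalIntegral.integral_nonneg ht.2 (fun x hx => ha0 x ⟨le_trans ht.1 hx.1, hx.2⟩)
    linarith [h1 ▸ h2]
  have hAt : (∫ s in (0:ℝ)..t, a s) ≤ (⌈2*M⌉₊ : ℝ) / 2 := by
    have := Nat.le_ceil (2*M)
    linarith
  have haux := gronwall_aux hT hc ha_int ha0 hφ_cont hφ0 h ⌈2*M⌉₊ t ht hAt
  linarith [h t ht]

lemma cs_int {T : ℝ} (hT : 0 < T) {h : ℝ → ℝ}
    (h0 : ∀ s ∈ Icc (0:ℝ) T, 0 ≤ h s)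
    (hint1 : IntegrableOn h (Icc 0 T))
    (hint2 : IntegrableOn (fun s => (h s)^2) (Icc 0 T)) :
    (∫ s in (0:ℝ)..T, h s)^2 ≤ T * ∫ s in (0:ℝ)..T, (h s)^2 := by
  have h0T : (0:ℝ) ∈ Icc (0:ℝ) T := ⟨le_refl _, hT.le⟩
  have hTT : T ∈ Icc (0:ℝ) T := ⟨hT.le, le_refl _⟩
  set I := ∫ s in (0:ℝ)..T, h s with hI
  set V := ∫ s in (0:ℝ)..T, (h s)^2 with hV
  set lam := I / T with hlam
  have key : (0:ℝ) ≤ ∫ s in (0:ℝ)..T, ((h s) - lam)^2 :=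
    intervalIntegral.integral_nonneg hT.le (fun x _ => sq_nonneg _)
  have hexp : (∫ s in (0:ℝ)..T, ((h s) - lam)^2)
      = V - 2*lam*I + lam^2 * T := by
    have hint3 : IntervalIntegrable (fun s => (h s)^2 - 2*lam*(h s)) volume 0 T :=
      ((interval_int_of_int hint2 h0T hTT).sub
        ((interval_int_of_int hint1 h0T hTT).const_mul (2*lam)))
    have : (fun s => ((h s) - lam)^2) = fun s => ((h s)^2 - 2*lam*(h s)) + lam^2 := by
      funext s; ring
    rw [this, intervalIntegral.integral_add hint3 intervalIntegrable_const,
      intervalIntegral.integral_sub (interval_int_of_int hint2 h0T hTT)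
        ((interval_int_of_int hint1 h0T hTT).const_mul (2*lam)),
      intervalIntegral.integral_const_mul, intervalIntegral.integral_const]
    rw [← hI, ← hV]
    simp only [smul_eq_mul, sub_zero]
    ring
  rw [hexp] at key
  have hlam2 : lam * T = I := by rw [hlam]; field_simp
  have : V - 2*lam*I + lam * (lam * T) ≥ 0 := by
    have : lam^2 * T = lam * (lam * T) := by ring
    linarith [this ▸ key]
  rw [hlam2] at this
  have hIlam : lam * I = I^2 / T := by rw [hlam]; field_simp
  rw [hIlam] at this
  have := (div_le_iff₀ hT).mp (by linarith : I^2 / T ≤ V)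
  linarith

lemma apriori (S : ControlledSetting N T) (R₁ R₂ : ℝ) :
    ∃ ρ ≥ (1:ℝ), ∀ (u₀ : ESp N) (v : ℝ → HSp) (u : ℝ → ESp N),
      ‖u₀‖ ≤ R₁ → IsControl T v → (∫ t in (0:ℝ)..T, ‖v t‖^2) ≤ R₂^2 →
      IsSolution S v u₀ u → ∀ t ∈ Icc (0:ℝ) T, ‖u t‖ ≤ ρ := by
  obtain ⟨C, hC, hgrow⟩ := S.hσ_growth
  have hT := S.hT.le
  have h0T : (0:ℝ) ∈ Icc (0:ℝ) T := ⟨le_refl _, hT⟩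
  have hTT : T ∈ Icc (0:ℝ) T := ⟨hT, le_refl _⟩
  set G := ∫ s in (0:ℝ)..T, ‖S.g s‖^2 with hGdef
  set c₀ := 2*|S.γ| + 1 + 4*C with hc₀
  have hc₀0 : 0 ≤ c₀ := by rw [hc₀]; positivity
  set M₀ := c₀ * T + G + 4*C*R₂^2 with hM₀
  set ρ := Real.sqrt (2^(⌈2*M₀⌉₊) * (1 + R₁^2)) with hρ
  have hpow1 : (1:ℝ) ≤ 2^(⌈2*M₀⌉₊) := one_le_pow₀ (by norm_num)
  have hρ1 : 1 ≤ ρ := by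
    rw [hρ]
    have h1 : (1:ℝ) ≤ 2^(⌈2*M₀⌉₊) * (1 + R₁^2) := by nlinarith [sq_nonneg R₁]
    calc (1:ℝ) = Real.sqrt 1 := (Real.sqrt_one).symm
      _ ≤ _ := Real.sqrt_le_sqrt h1
  refine ⟨ρ, hρ1, ?_⟩
  intro u₀ v u hu₀ hv hvR hsol
  obtain ⟨hu_cont, husol⟩ := hsol
  have hu0 : u 0 = u₀ := by have := husol 0 h0T; simpa using this
  set F : ℝ → ESp N := fun s => -(S.ν • S.A (u s)) - S.f (u s) - S.γ • u s + S.g s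
    + S.σ s (u s) (v s) with hF
  have hF_int : IntegrableOn F (Icc 0 T) := drift_int S hu_cont hv
  have hu' : ∀ t ∈ Icc (0:ℝ) T, u t = u 0 + ∫ s in (0:ℝ)..t, F s := by
    intro t ht; rw [hu0]; exact husol t ht
  have energy := energy_ineq hT hu_cont hF_int hu'
  set α : ℝ → ℝ := fun s => c₀ + ‖S.g s‖^2 + 4*C*‖v s‖^2 with hα
  have hα0 : ∀ s ∈ Icc (0:ℝ) T, 0 ≤ α s := by
    intro s hs; rw [hα]
    have := sq_nonneg ‖S.g s‖; have := sq_nonneg ‖v s‖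
    simp only; nlinarith [hC.le]
  have hα_int : IntegrableOn α (Icc 0 T) := by
    have h1 : IntegrableOn (fun _ : ℝ => c₀) (Icc 0 T) :=
      integrableOn_const measure_Icc_lt_top.ne
    exact (h1.add S.hg_int).add (hv.2.const_mul (4*C))
  set φ : ℝ → ℝ := fun t => 1 + ‖u t‖^2 with hφ
  have hφ_cont : ContinuousOn φ (Icc 0 T) := continuousOn_const.add ((hu_cont.norm).pow 2)
  have hφ0 : ∀ s ∈ Icc (0:ℝ) T, 0 ≤ φ s := by
    intro s _; rw [hφ]; positivity
  obtain ⟨K, hK⟩ := (isCompact_Icc (a:=(0:ℝ)) (b:=T)).exists_bound_of_continuousOn hu_cont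
  have hK0 : 0 ≤ K := le_trans (norm_nonneg _) (hK 0 h0T)
  have hFu_int : IntegrableOn (fun s => (inner ℝ (F s) (u s) : ℝ)) (Icc 0 T) := by
    refine Integrable.mono' (hF_int.norm.const_mul K)
      (AEStronglyMeasurable.inner hF_int.aestronglyMeasurable
        (hu_cont.aestronglyMeasurable measurableSet_Icc)) ?_
    filter_upwards [ae_restrict_mem measurableSet_Icc] with s hs
    calc ‖(inner ℝ (F s) (u s) : ℝ)‖ ≤ ‖F s‖ * ‖u s‖ := norm_inner_le_norm _ _
      _ ≤ K * ‖F s‖ := by have := hK s hs; nlinarith [norm_nonneg (F s)]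
  have hαφ_int : IntegrableOn (fun s => α s * φ s) (Icc 0 T) := by
    refine Integrable.mono' (hα_int.norm.const_mul (1 + K^2))
      (hα_int.aestronglyMeasurable.mul (hφ_cont.aestronglyMeasurable measurableSet_Icc)) ?_
    filter_upwards [ae_restrict_mem measurableSet_Icc] with s hs
    have h1 := hK s hs
    have h2 : |φ s| ≤ 1 + K^2 := by
      rw [hφ]; simp only; rw [abs_of_nonneg (by positivity)]; nlinarith [norm_nonneg (u s)]
    rw [Real.norm_eq_abs, abs_mul, Real.norm_eq_abs]
    nlinarith [abs_nonneg (α s), abs_nonneg (φ s)]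
  have hpt : ∀ s ∈ Icc (0:ℝ) T, 2 * (inner ℝ (F s) (u s) : ℝ) ≤ α s * φ s := by
    intro s hs
    set x := ‖u s‖ with hx
    have hx0 : 0 ≤ x := norm_nonneg _
    have e1 : (inner ℝ (F s) (u s) : ℝ) =
        -(S.ν * (inner ℝ (S.A (u s)) (u s) : ℝ)) - (inner ℝ (S.f (u s)) (u s) : ℝ)
        - S.γ * (inner ℝ (u s) (u s) : ℝ) + (inner ℝ (S.g s) (u s) : ℝ)
        + (inner ℝ (S.σ s (u s) (v s)) (u s) : ℝ) := by
      rw [hF]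
      simp only [inner_add_left, inner_sub_left, inner_neg_left, real_inner_smul_left]
    have b1 : 0 ≤ S.ν * (inner ℝ (S.A (u s)) (u s) : ℝ) := mul_nonneg S.hν.le (S.hA_nonneg _)
    have b2 : 0 ≤ (inner ℝ (S.f (u s)) (u s) : ℝ) := by
      have := S.hf_mono (u s) 0
      rw [S.hf0, sub_zero, sub_zero] at this
      exact this
    have b3 : (inner ℝ (u s) (u s) : ℝ) = x^2 := real_inner_self_eq_norm_sq _
    have b4 : (inner ℝ (S.g s) (u s) : ℝ) ≤ ‖S.g s‖ * x := real_inner_le_norm _ _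
    have b5 : (inner ℝ (S.σ s (u s) (v s)) (u s) : ℝ) ≤ (C * (1+x) * ‖v s‖) * x := by
      have h1 : (inner ℝ (S.σ s (u s) (v s)) (u s) : ℝ) ≤ ‖S.σ s (u s) (v s)‖ * x :=
        real_inner_le_norm _ _
      have h2 : ‖S.σ s (u s) (v s)‖ ≤ ‖S.σ s (u s)‖ * ‖v s‖ :=
        (S.σ s (u s)).le_opNorm _
      have h3 : ‖S.σ s (u s)‖ ≤ C * (1 + x) := hgrow s hs (u s)
      have h4 : ‖S.σ s (u s) (v s)‖ ≤ C * (1+x) * ‖v s‖ :=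
        le_trans h2 (mul_le_mul_of_nonneg_right h3 (norm_nonneg _))
      exact le_trans h1 (mul_le_mul_of_nonneg_right h4 hx0)
    have hγ : -(S.γ * x^2) = |S.γ| * x^2 := by rw [abs_of_nonpos S.hγ]; ring
    set gg := ‖S.g s‖ with hgg
    set vv := ‖v s‖ with hvv
    have hgg0 : 0 ≤ gg := norm_nonneg _
    have hvv0 : 0 ≤ vv := norm_nonneg _
    have hx0' : 0 ≤ x := hx0
    clear_value x gg vv
    have t1 : 2*(gg*x) ≤ gg^2 + x^2 := by nlinarith only [sq_nonneg (gg - x)]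
    have t2 : 2*vv ≤ 1 + vv^2 := by nlinarith only [sq_nonneg (vv-1)]
    have t3 : (1+x)*x ≤ 2*(1+x^2) := by nlinarith only [sq_nonneg (x-1)]
    have t4 : 2*(C*(1+x)*vv*x) ≤ (4*C + 4*C*vv^2)*(1+x^2) := by
      have h5 : (2*vv) * ((1+x)*x) ≤ (1+vv^2) * (2*(1+x^2)) :=
        mul_le_mul t2 t3 (by positivity) (by positivity)
      nlinarith only [h5, hC.le, sq_nonneg x, sq_nonneg vv, hvv0, hx0', mul_nonneg (mul_nonneg hC.le (sq_nonneg vv)) (sq_nonneg x)]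
    have r1 : |S.γ| * x^2 ≤ |S.γ| * (1+x^2) := by nlinarith only [abs_nonneg S.γ, sq_nonneg x]
    have r2 : gg^2 + x^2 ≤ (1 + gg^2)*(1+x^2) := by nlinarith only [sq_nonneg (gg*x)]
    have final : 2*(|S.γ| * x^2 + gg*x + C*(1+x)*vv*x) ≤ (c₀ + gg^2 + 4*C*vv^2)*(1+x^2) := by
      rw [hc₀]; nlinarith only [r1, t1, r2, t4, abs_nonneg S.γ, hC.le, hx0', hvv0, hgg0]
    rw [hα, hφ]
    simp only
    rw [e1, b3, ← hgg, ← hvv, ← hx]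
    linarith only [b1, b2, b4, b5, hγ, final]
  have hgr : ∀ t ∈ Icc (0:ℝ) T, φ t ≤ (1 + R₁^2) + ∫ s in (0:ℝ)..t, α s * φ s := by
    intro t ht
    have h1 := energy t ht
    have h2 : 2 * (∫ s in (0:ℝ)..t, (inner ℝ (F s) (u s) : ℝ)) ≤ ∫ s in (0:ℝ)..t, α s * φ s := by
      rw [← intervalIntegral.integral_const_mul]
      apply integral_mono_on ht.1 ((interval_int_of_int' hFu_int h0T ht).const_mul 2)
        (interval_int_of_int' hαφ_int h0T ht)
      intro x hx; exact hpt x ⟨hx.1, le_trans hx.2 ht.2⟩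
    have h3 : ‖u 0‖^2 ≤ R₁^2 := by
      rw [hu0]; nlinarith [norm_nonneg u₀]
    rw [hφ]; simp only; linarith
  have hαM : (∫ s in (0:ℝ)..T, α s) ≤ M₀ := by
    have e2 : (∫ s in (0:ℝ)..T, α s)
        = c₀ * T + (∫ s in (0:ℝ)..T, ‖S.g s‖^2) + 4*C*(∫ s in (0:ℝ)..T, ‖v s‖^2) := by
      rw [hα]
      rw [intervalIntegral.integral_add (intervalIntegrable_const.add
          (interval_int_of_int S.hg_int h0T hTT))
        ((interval_int_of_int hv.2 h0T hTT).const_mul (4*C))]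
      rw [intervalIntegral.integral_add intervalIntegrable_const
        (interval_int_of_int S.hg_int h0T hTT)]
      rw [intervalIntegral.integral_const_mul, intervalIntegral.integral_const]
      simp only [smul_eq_mul, sub_zero]
      ring
    rw [e2, hM₀, ← hGdef]
    have h4 := mul_le_mul_of_nonneg_left hvR (by positivity : (0:ℝ) ≤ 4*C)
    linarith
  intro t ht
  have hb := gronwall hT (by positivity : (0:ℝ) ≤ 1 + R₁^2) hα_int hα0 hφ_cont hφ0 hgr hαM t ht
  have hρsq : ρ^2 = 2^(⌈2*M₀⌉₊) * (1 + R₁^2) := Real.sq_sqrt (by positivity)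
  have hsq : ‖u t‖^2 ≤ ρ^2 := by
    rw [hρsq]
    rw [hφ] at hb; simp only at hb
    linarith
  calc ‖u t‖ = Real.sqrt (‖u t‖^2) := (Real.sqrt_sq (norm_nonneg _)).symm
    _ ≤ Real.sqrt (ρ^2) := Real.sqrt_le_sqrt hsq
    _ = ρ := Real.sqrt_sq (le_trans zero_le_one hρ1)

end Aux

open intervalIntegral

/-- For each `R₁, R₂ > 0` there exists `C₁ = C₁(R₁,R₂,T) > 0` such that
for any initial data with norms `≤ R₁` and controls with `L²(0,T;H)`-norms `≤ R₂`,
the corresponding solutions satisfy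
`‖u_{v₁} - u_{v₂}‖²_{C([0,T],ℓ²)} ≤ C₁(‖u_{0,1} - u_{0,2}‖² + ‖v₁ - v₂‖²_{L²(0,T;H)})`. -/
theorem stmt10 (N : ℕ) (T : ℝ) (S : ControlledSetting N T) :
    ∀ R₁ > (0:ℝ), ∀ R₂ > (0:ℝ), ∃ C₁ > (0:ℝ),
      ∀ (u₀₁ u₀₂ : ESp N) (v₁ v₂ : ℝ → HSp) (u₁ u₂ : ℝ → ESp N),
        ‖u₀₁‖ ≤ R₁ → ‖u₀₂‖ ≤ R₁ →
        IsControl T v₁ → IsControl T v₂ →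
        (∫ t in (0:ℝ)..T, ‖v₁ t‖ ^ 2) ≤ R₂ ^ 2 →
        (∫ t in (0:ℝ)..T, ‖v₂ t‖ ^ 2) ≤ R₂ ^ 2 →
        IsSolution S v₁ u₀₁ u₁ → IsSolution S v₂ u₀₂ u₂ →
        ∀ t ∈ Icc (0:ℝ) T,
          ‖u₁ t - u₂ t‖ ^ 2 ≤
            C₁ * (‖u₀₁ - u₀₂‖ ^ 2 + ∫ t in (0:ℝ)..T, ‖v₁ t - v₂ t‖ ^ 2) := by
  intro R₁ hR₁ R₂ hR₂
  obtain ⟨ρ, hρ1, hbound⟩ := apriori S R₁ R₂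
  have hρ0 : (0:ℝ) < ρ := lt_of_lt_of_le one_pos hρ1
  obtain ⟨Lf, hLf, hflip⟩ := S.hf_lip ρ hρ0
  obtain ⟨Lσ, hLσ, hσlip⟩ := S.hσ_lip ρ hρ0
  obtain ⟨C, hC, hgrow⟩ := S.hσ_growth
  have hT := S.hT.le
  have h0T : (0:ℝ) ∈ Icc (0:ℝ) T := ⟨le_refl _, hT⟩
  have hTT : T ∈ Icc (0:ℝ) T := ⟨hT, le_refl _⟩
  set M₁ := (S.ν*‖S.A‖ + |S.γ| + Lf)*T + Lσ*(T + R₂^2) with hM₁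
  set J := ⌈2*M₁⌉₊ with hJ
  set C₁ := ((2:ℝ)^J)^2 * (2 + 2*C^2*(1+ρ)^2*T) with hC₁
  have hC₁0 : 0 < C₁ := by rw [hC₁]; positivity
  refine ⟨C₁, hC₁0, ?_⟩
  intro u₀₁ u₀₂ v₁ v₂ u₁ u₂ hu01 hu02 hv₁ hv₂ hv₁R hv₂R hsol₁ hsol₂
  have hb₁ := hbound u₀₁ v₁ u₁ hu01 hv₁ hv₁R hsol₁
  have hb₂ := hbound u₀₂ v₂ u₂ hu02 hv₂ hv₂R hsol₂
  obtain ⟨hu₁c, hsol₁'⟩ := hsol₁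
  obtain ⟨hu₂c, hsol₂'⟩ := hsol₂
  set F₁ : ℝ → ESp N := fun s => -(S.ν • S.A (u₁ s)) - S.f (u₁ s) - S.γ • u₁ s + S.g s
    + S.σ s (u₁ s) (v₁ s) with hF₁
  set F₂ : ℝ → ESp N := fun s => -(S.ν • S.A (u₂ s)) - S.f (u₂ s) - S.γ • u₂ s + S.g s
    + S.σ s (u₂ s) (v₂ s) with hF₂
  have hF₁int : IntegrableOn F₁ (Icc 0 T) := drift_int S hu₁c hv₁
  have hF₂int : IntegrableOn F₂ (Icc 0 T) := drift_int S hu₂c hv₂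
  set φ : ℝ → ℝ := fun t => ‖u₁ t - u₂ t‖ with hφ
  set a : ℝ → ℝ := fun s => S.ν*‖S.A‖ + |S.γ| + Lf + Lσ*‖v₁ s‖ with ha
  set b : ℝ → ℝ := fun s => C*(1+ρ)*‖v₁ s - v₂ s‖ with hb
  have hv₁n : IntegrableOn (fun s => ‖v₁ s‖) (Icc 0 T) := norm_int_of_sq hv₁.1 hv₁.2
  have hΔv_meas : AEStronglyMeasurable (fun s => v₁ s - v₂ s) (volume.restrict (Icc 0 T)) :=
    hv₁.1.sub hv₂.1
  have hΔv_sq_meas : AEStronglyMeasurable (fun s => ‖v₁ s - v₂ s‖^2)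
      (volume.restrict (Icc 0 T)) := by
    apply (hΔv_meas.norm.mul hΔv_meas.norm).congr
    filter_upwards with s
    exact (pow_two _).symm
  have hΔv_sq_int : IntegrableOn (fun s => ‖v₁ s - v₂ s‖^2) (Icc 0 T) := by
    refine Integrable.mono' ((hv₁.2.const_mul 2).add (hv₂.2.const_mul 2)) hΔv_sq_meas ?_
    filter_upwards with s
    simp only [Pi.add_apply]
    rw [Real.norm_eq_abs, abs_of_nonneg (sq_nonneg _)]
    have h1 : ‖v₁ s - v₂ s‖ ≤ ‖v₁ s‖ + ‖v₂ s‖ := norm_sub_le _ _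
    nlinarith only [h1, norm_nonneg (v₁ s), norm_nonneg (v₂ s),
      sq_nonneg (‖v₁ s‖ - ‖v₂ s‖), norm_nonneg (v₁ s - v₂ s)]
  have hΔv_n_int : IntegrableOn (fun s => ‖v₁ s - v₂ s‖) (Icc 0 T) :=
    norm_int_of_sq hΔv_meas hΔv_sq_int
  have hb_int : IntegrableOn b (Icc 0 T) := hΔv_n_int.const_mul _
  have hb0 : ∀ s ∈ Icc (0:ℝ) T, 0 ≤ b s := by
    intro s _; rw [hb]; positivity
  have ha_int : IntegrableOn a (Icc 0 T) := by
    have h1 : IntegrableOn (fun _ : ℝ => S.ν*‖S.A‖ + |S.γ| + Lf) (Icc 0 T) :=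
      integrableOn_const measure_Icc_lt_top.ne
    exact h1.add (hv₁n.const_mul Lσ)
  have ha0 : ∀ s ∈ Icc (0:ℝ) T, 0 ≤ a s := by
    intro s _; rw [ha]
    have h1 : 0 ≤ Lσ*‖v₁ s‖ := mul_nonneg hLσ.le (norm_nonneg _)
    have h2 : 0 ≤ S.ν*‖S.A‖ := mul_nonneg S.hν.le (norm_nonneg _)
    simp only
    nlinarith only [h1, h2, abs_nonneg S.γ, hLf.le]
  have hφc : ContinuousOn φ (Icc 0 T) := (hu₁c.sub hu₂c).norm
  have hφ0 : ∀ s ∈ Icc (0:ℝ) T, 0 ≤ φ s := fun s _ => norm_nonneg _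
  have hφbd : ∀ s ∈ Icc (0:ℝ) T, φ s ≤ 2*ρ := by
    intro s hs; rw [hφ]
    calc ‖u₁ s - u₂ s‖ ≤ ‖u₁ s‖ + ‖u₂ s‖ := norm_sub_le _ _
      _ ≤ 2*ρ := by linarith [hb₁ s hs, hb₂ s hs]
  have haφ_int : IntegrableOn (fun s => a s * φ s) (Icc 0 T) := by
    refine Integrable.mono' (ha_int.norm.const_mul (2*ρ))
      (ha_int.aestronglyMeasurable.mul (hφc.aestronglyMeasurable measurableSet_Icc)) ?_
    filter_upwards [ae_restrict_mem measurableSet_Icc] with s hs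
    rw [Real.norm_eq_abs, abs_mul, Real.norm_eq_abs]
    have h1 : |φ s| ≤ 2*ρ := by rw [abs_of_nonneg (hφ0 s hs)]; exact hφbd s hs
    have h2 := mul_le_mul_of_nonneg_left h1 (abs_nonneg (a s))
    linarith [h2]
  have hFd : ∀ s ∈ Icc (0:ℝ) T, ‖F₁ s - F₂ s‖ ≤ a s * φ s + b s := by
    intro s hs
    have h1 : ‖u₁ s‖ ≤ ρ := hb₁ s hs
    have h2 : ‖u₂ s‖ ≤ ρ := hb₂ s hs
    have hdecomp : F₁ s - F₂ s =
        (-(S.ν • S.A (u₁ s - u₂ s))) + (-(S.f (u₁ s) - S.f (u₂ s)))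
        + (-(S.γ • (u₁ s - u₂ s)))
        + ((S.σ s (u₁ s) - S.σ s (u₂ s)) (v₁ s)) + (S.σ s (u₂ s)) (v₁ s - v₂ s) := by
      rw [hF₁, hF₂]
      simp only [map_sub, ContinuousLinearMap.sub_apply, smul_sub]
      abel
    have n1 : ‖S.ν • S.A (u₁ s - u₂ s)‖ ≤ S.ν * ‖S.A‖ * ‖u₁ s - u₂ s‖ := by
      rw [norm_smul, Real.norm_eq_abs, abs_of_pos S.hν, mul_assoc]
      exact mul_le_mul_of_nonneg_left (S.A.le_opNorm _) S.hν.le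
    have n2 : ‖S.f (u₁ s) - S.f (u₂ s)‖ ≤ Lf * ‖u₁ s - u₂ s‖ := hflip (u₁ s) (u₂ s) h1 h2
    have n3 : ‖S.γ • (u₁ s - u₂ s)‖ = |S.γ| * ‖u₁ s - u₂ s‖ := by
      rw [norm_smul, Real.norm_eq_abs]
    have n4 : ‖(S.σ s (u₁ s) - S.σ s (u₂ s)) (v₁ s)‖ ≤ Lσ * ‖u₁ s - u₂ s‖ * ‖v₁ s‖ := by
      refine le_trans ((S.σ s (u₁ s) - S.σ s (u₂ s)).le_opNorm _) ?_
      exact mul_le_mul_of_nonneg_right (hσlip s hs (u₁ s) (u₂ s) h1 h2) (norm_nonneg _)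
    have n5 : ‖(S.σ s (u₂ s)) (v₁ s - v₂ s)‖ ≤ C*(1+ρ) * ‖v₁ s - v₂ s‖ := by
      refine le_trans ((S.σ s (u₂ s)).le_opNorm _) ?_
      refine mul_le_mul_of_nonneg_right ?_ (norm_nonneg _)
      refine le_trans (hgrow s hs (u₂ s)) ?_
      nlinarith only [hC.le, h2]
    rw [hdecomp]
    calc ‖(-(S.ν • S.A (u₁ s - u₂ s))) + (-(S.f (u₁ s) - S.f (u₂ s)))
        + (-(S.γ • (u₁ s - u₂ s)))
        + ((S.σ s (u₁ s) - S.σ s (u₂ s)) (v₁ s)) + (S.σ s (u₂ s)) (v₁ s - v₂ s)‖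
        ≤ ‖(-(S.ν • S.A (u₁ s - u₂ s))) + (-(S.f (u₁ s) - S.f (u₂ s)))
          + (-(S.γ • (u₁ s - u₂ s)))
          + ((S.σ s (u₁ s) - S.σ s (u₂ s)) (v₁ s))‖ + ‖(S.σ s (u₂ s)) (v₁ s - v₂ s)‖ :=
        norm_add_le _ _
      _ ≤ (‖(-(S.ν • S.A (u₁ s - u₂ s))) + (-(S.f (u₁ s) - S.f (u₂ s)))
          + (-(S.γ • (u₁ s - u₂ s)))‖ + ‖(S.σ s (u₁ s) - S.σ s (u₂ s)) (v₁ s)‖)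
          + ‖(S.σ s (u₂ s)) (v₁ s - v₂ s)‖ := by
        have := norm_add_le ((-(S.ν • S.A (u₁ s - u₂ s))) + (-(S.f (u₁ s) - S.f (u₂ s)))
          + (-(S.γ • (u₁ s - u₂ s)))) ((S.σ s (u₁ s) - S.σ s (u₂ s)) (v₁ s))
        linarith
      _ ≤ ((‖(-(S.ν • S.A (u₁ s - u₂ s))) + (-(S.f (u₁ s) - S.f (u₂ s)))‖
          + ‖S.γ • (u₁ s - u₂ s)‖) + ‖(S.σ s (u₁ s) - S.σ s (u₂ s)) (v₁ s)‖)
          + ‖(S.σ s (u₂ s)) (v₁ s - v₂ s)‖ := by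
        have h3 := norm_add_le ((-(S.ν • S.A (u₁ s - u₂ s))) + (-(S.f (u₁ s) - S.f (u₂ s))))
          (-(S.γ • (u₁ s - u₂ s)))
        rw [norm_neg (S.γ • (u₁ s - u₂ s))] at h3
        linarith
      _ ≤ (((‖S.ν • S.A (u₁ s - u₂ s)‖ + ‖S.f (u₁ s) - S.f (u₂ s)‖)
          + ‖S.γ • (u₁ s - u₂ s)‖) + ‖(S.σ s (u₁ s) - S.σ s (u₂ s)) (v₁ s)‖)
          + ‖(S.σ s (u₂ s)) (v₁ s - v₂ s)‖ := by
        have h3 := norm_add_le (-(S.ν • S.A (u₁ s - u₂ s))) (-(S.f (u₁ s) - S.f (u₂ s)))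
        rw [norm_neg, norm_neg] at h3
        linarith
      _ ≤ a s * φ s + b s := by
        rw [ha, hφ, hb, n3]
        simp only
        nlinarith only [n1, n2, n4, n5]
  set D := ‖u₀₁ - u₀₂‖ with hD
  have hD0 : 0 ≤ D := norm_nonneg _
  set Bv := ∫ s in (0:ℝ)..T, b s with hBv
  have hBv0 : 0 ≤ Bv :=
    intervalIntegral.integral_nonneg hT (fun x hx => hb0 x hx)
  set c := D + Bv with hc
  have hc0 : 0 ≤ c := by rw [hc]; linarith
  have hgr : ∀ t ∈ Icc (0:ℝ) T, φ t ≤ c + ∫ s in (0:ℝ)..t, a s * φ s := by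
    intro t ht
    have hw : u₁ t - u₂ t = (u₀₁ - u₀₂) + ∫ s in (0:ℝ)..t, (F₁ s - F₂ s) := by
      rw [hsol₁' t ht, hsol₂' t ht,
        intervalIntegral.integral_sub (interval_int_of_int' hF₁int h0T ht)
          (interval_int_of_int' hF₂int h0T ht)]
      abel
    have h1 : φ t ≤ D + ∫ s in (0:ℝ)..t, ‖F₁ s - F₂ s‖ := by
      rw [hφ]; simp only
      rw [hw]
      refine le_trans (norm_add_le _ _) ?_
      rw [hD]
      exact add_le_add_right (intervalIntegral.norm_integral_le_integral_norm ht.1) _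
    have h2 : (∫ s in (0:ℝ)..t, ‖F₁ s - F₂ s‖) ≤ ∫ s in (0:ℝ)..t, (a s * φ s + b s) := by
      apply integral_mono_on ht.1
        (interval_int_of_int' (hF₁int.sub hF₂int).norm h0T ht)
        (interval_int_of_int' (haφ_int.add hb_int) h0T ht)
      intro x hx
      exact hFd x ⟨hx.1, le_trans hx.2 ht.2⟩
    have h3 : (∫ s in (0:ℝ)..t, (a s * φ s + b s))
        = (∫ s in (0:ℝ)..t, a s * φ s) + ∫ s in (0:ℝ)..t, b s :=
      intervalIntegral.integral_add (interval_int_of_int' haφ_int h0T ht)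
        (interval_int_of_int' hb_int h0T ht)
    have h4 : (∫ s in (0:ℝ)..t, b s) ≤ Bv := by
      have h5 := integral_interval_sub_left (interval_int_of_int' hb_int h0T hTT)
        (interval_int_of_int' hb_int h0T ht)
      have h6 : (0:ℝ) ≤ ∫ s in t..T, b s :=
        intervalIntegral.integral_nonneg ht.2
          (fun x hx => hb0 x ⟨le_trans ht.1 hx.1, hx.2⟩)
      rw [hBv]; linarith [h5 ▸ h6]
    rw [hc]
    linarith
  have haM : (∫ s in (0:ℝ)..T, a s) ≤ M₁ := by
    have e1 : (∫ s in (0:ℝ)..T, a s)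
        = (S.ν*‖S.A‖ + |S.γ| + Lf)*T + Lσ*(∫ s in (0:ℝ)..T, ‖v₁ s‖) := by
      rw [ha]
      rw [intervalIntegral.integral_add intervalIntegrable_const
        ((interval_int_of_int hv₁n h0T hTT).const_mul Lσ),
        intervalIntegral.integral_const_mul, intervalIntegral.integral_const]
      simp only [smul_eq_mul, sub_zero]
      ring
    have e2 : (∫ s in (0:ℝ)..T, ‖v₁ s‖) ≤ T + ∫ s in (0:ℝ)..T, ‖v₁ s‖^2 := by
      have h6 : (∫ s in (0:ℝ)..T, ‖v₁ s‖) ≤ ∫ s in (0:ℝ)..T, (1 + ‖v₁ s‖^2) := by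
        apply integral_mono_on hT (interval_int_of_int hv₁n h0T hTT)
          (intervalIntegrable_const.add (interval_int_of_int hv₁.2 h0T hTT))
        intro x _
        nlinarith only [sq_nonneg (‖v₁ x‖ - 1)]
      rw [intervalIntegral.integral_add intervalIntegrable_const
        (interval_int_of_int hv₁.2 h0T hTT), intervalIntegral.integral_const] at h6
      simpa [smul_eq_mul] using h6
    rw [e1, hM₁]
    have h7 : (∫ s in (0:ℝ)..T, ‖v₁ s‖) ≤ T + R₂^2 := by linarith [hv₁R]
    have h8 := mul_le_mul_of_nonneg_left h7 hLσ.le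
    linarith
  have hgron := gronwall hT hc0 ha_int ha0 hφc hφ0 hgr haM
  intro t ht
  have hφt := hgron t ht
  set V := ∫ t in (0:ℝ)..T, ‖v₁ t - v₂ t‖ ^ 2 with hV
  have hV0 : 0 ≤ V :=
    intervalIntegral.integral_nonneg hT (fun x _ => sq_nonneg _)
  have hcs : (∫ s in (0:ℝ)..T, ‖v₁ s - v₂ s‖)^2 ≤ T * V :=
    cs_int S.hT (fun s _ => norm_nonneg _) hΔv_n_int hΔv_sq_int
  have hφt2 : φ t ^ 2 ≤ ((2:ℝ)^J)^2 * c^2 := by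
    have h1 : φ t ^ 2 ≤ ((2:ℝ)^J * c)^2 := by
      have := hφ0 t ht
      nlinarith only [hφt, this]
    calc φ t ^ 2 ≤ ((2:ℝ)^J * c)^2 := h1
      _ = ((2:ℝ)^J)^2 * c^2 := by ring
  have hc2 : c^2 ≤ 2*D^2 + 2*Bv^2 := by
    rw [hc]; nlinarith only [sq_nonneg (D - Bv)]
  have hBv2 : Bv^2 ≤ C^2*(1+ρ)^2 * (T * V) := by
    have hBv_eq : Bv = C*(1+ρ) * ∫ s in (0:ℝ)..T, ‖v₁ s - v₂ s‖ := by
      rw [hBv, hb, intervalIntegral.integral_const_mul]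
    rw [hBv_eq]
    calc (C*(1+ρ) * ∫ s in (0:ℝ)..T, ‖v₁ s - v₂ s‖)^2
        = (C*(1+ρ))^2 * (∫ s in (0:ℝ)..T, ‖v₁ s - v₂ s‖)^2 := by ring
      _ ≤ (C*(1+ρ))^2 * (T * V) :=
          mul_le_mul_of_nonneg_left hcs (sq_nonneg (C*(1+ρ)))
      _ = C^2*(1+ρ)^2 * (T * V) := by ring
  have hP : (0:ℝ) ≤ ((2:ℝ)^J)^2 := by positivity
  have hK2 : (0:ℝ) ≤ C^2*(1+ρ)^2*T := by positivity
  have s2 : ((2:ℝ)^J)^2 * c^2 ≤ ((2:ℝ)^J)^2 * (2*D^2 + 2*Bv^2) :=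
    mul_le_mul_of_nonneg_left hc2 hP
  have s4 : ((2:ℝ)^J)^2 * (2*D^2 + 2*Bv^2)
      ≤ ((2:ℝ)^J)^2 * (2*D^2 + 2*(C^2*(1+ρ)^2*T*V)) := by
    refine mul_le_mul_of_nonneg_left ?_ hP
    have : Bv^2 ≤ C^2*(1+ρ)^2*T*V := by
      calc Bv^2 ≤ C^2*(1+ρ)^2 * (T * V) := hBv2
        _ = C^2*(1+ρ)^2*T*V := by ring
    linarith
  have s5 : ((2:ℝ)^J)^2 * (2*D^2 + 2*(C^2*(1+ρ)^2*T*V)) ≤ C₁*(D^2 + V) := by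
    rw [hC₁]
    have hD2 : 0 ≤ D^2 := sq_nonneg _
    nlinarith only [hP, hD2, hV0, hK2, mul_nonneg hP (mul_nonneg hK2 hD2),
      mul_nonneg hP hV0]
  have hgoal : φ t ^ 2 ≤ C₁ * (D^2 + V) := by linarith
  rw [hφ, hD] at hgoal
  exact hgoal
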